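/- Let T be a tree (with no isolated vertices), let v be a vertex of T, and suppose ttr(v, T) = t. Then for every i with 1 ≤ i ≤ t, there exists a total transitive partition {V_1, V_2, ..., V_i} of T of size i such that v ∈ V_i. -/
import Mathlib


/-- A total transitive partition of `G` into `k` parts: the parts are nonempty, they
partition the vertex set, and `V_i` dominates `V_j` for all `i ≤ j`. -/
def TTPartition {V : Type*} (G : SimpleGraph V) (k : ℕ) (P : Fin k → Set V) : Prop :=
  (∀ i, (P i).Nonempty) ∧
  (∀ v : V, ∃! i, v ∈ P i) ∧
  (∀ i j : Fin k, i ≤ j → ∀ v ∈ P j, ∃ u ∈ P i, G.Adj u v)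

/-- If `T` is a tree, `v` a vertex of `T`, and the total transitive number of `v` in `T`
is `t` (the largest `p` such that `v ∈ V_p` in some total transitive partition of `T`),
then for every `1 ≤ i ≤ t` there is a total transitive partition `{V_1, …, V_i}` of `T`
of size `i` with `v ∈ V_i`. -/
theorem stmt18 {V : Type*} [Fintype V] (T : SimpleGraph V) (hT : T.IsTree)
    (hiso : ∀ v : V, ∃ u : V, T.Adj v u)
    (v : V) (t : ℕ)
    (ht : IsGreatest {p : ℕ | ∃ k : ℕ, ∃ P : Fin k → Set V, TTPartition T k P ∧
            ∃ i : Fin k, (i : ℕ) + 1 = p ∧ v ∈ P i} t) :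
    ∀ i : ℕ, ∀ hi1 : 1 ≤ i, i ≤ t →
      ∃ P : Fin i → Set V, TTPartition T i P ∧ v ∈ P ⟨i - 1, by omega⟩ := by
  intro i hi1 hit
  obtain ⟨⟨k, P, ⟨hne, huniq, hdom⟩, j, hj, hv⟩, -⟩ := ht
  have hjk := j.isLt
  have hik : i ≤ k := by omega
  set Q : Fin i → Set V := fun l =>
    if (l : ℕ) + 1 = i then {w | ∃ m : Fin k, i - 1 ≤ (m : ℕ) ∧ w ∈ P m}
    else P ⟨(l : ℕ), lt_of_lt_of_le l.isLt hik⟩ with hQ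
  refine ⟨Q, ⟨?_, ?_, ?_⟩, ?_⟩
  · intro l
    by_cases h : (l : ℕ) + 1 = i
    · obtain ⟨w, hw⟩ := hne ⟨i - 1, by omega⟩
      refine ⟨w, ?_⟩
      simp only [hQ, if_pos h]
      exact ⟨⟨i - 1, by omega⟩, le_refl _, hw⟩
    · obtain ⟨w, hw⟩ := hne ⟨(l : ℕ), lt_of_lt_of_le l.isLt hik⟩
      refine ⟨w, ?_⟩
      simp only [hQ, if_neg h]
      exact hw
  · intro w
    obtain ⟨m, hm, hmu⟩ := huniq w
    by_cases hc : (m : ℕ) < i - 1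
    · refine ⟨⟨(m : ℕ), by omega⟩, ?_, ?_⟩
      · simp only [hQ]
        rw [if_neg (by omega)]
        simpa [Fin.eta] using hm
      · intro l hl
        simp only [hQ] at hl
        by_cases h : (l : ℕ) + 1 = i
        · rw [if_pos h] at hl
          obtain ⟨m', hm1', hm2'⟩ := hl
          have := hmu m' hm2'
          subst this
          omega
        · rw [if_neg h] at hl
          have := hmu _ hl
          have hval : (l : ℕ) = (m : ℕ) := by
            have := congrArg Fin.val this
            simpa using this
          exact Fin.ext (by simpa using hval)
    · refine ⟨⟨i - 1, by omega⟩, ?_, ?_⟩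
      · simp only [hQ]
        rw [if_pos (by omega)]
        exact ⟨m, by omega, hm⟩
      · intro l hl
        simp only [hQ] at hl
        by_cases h : (l : ℕ) + 1 = i
        · exact Fin.ext (by simp only [Fin.val_mk]; omega)
        · rw [if_neg h] at hl
          have := hmu _ hl
          have hval : (l : ℕ) = (m : ℕ) := by
            have := congrArg Fin.val this
            simpa using this
          have hli := l.isLt
          omega
  · intro a b hab w hw
    have hab' : (a : ℕ) ≤ (b : ℕ) := hab
    have hai := a.isLt
    have hbi := b.isLt
    simp only [hQ] at hw ⊢
    by_cases hb : (b : ℕ) + 1 = i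
    · rw [if_pos hb] at hw
      obtain ⟨m, hm1, hm2⟩ := hw
      by_cases ha : (a : ℕ) + 1 = i
      · obtain ⟨u, hu, hadj⟩ :=
          hdom ⟨i - 1, by omega⟩ m (by simp only [Fin.le_def, Fin.val_mk]; omega) w hm2
        refine ⟨u, ?_, hadj⟩
        rw [if_pos ha]
        exact ⟨⟨i - 1, by omega⟩, le_refl _, hu⟩
      · obtain ⟨u, hu, hadj⟩ :=
          hdom ⟨(a : ℕ), lt_of_lt_of_le a.isLt hik⟩ m (by simp only [Fin.le_def, Fin.val_mk]; omega) w hm2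
        refine ⟨u, ?_, hadj⟩
        rw [if_neg ha]
        exact hu
    · rw [if_neg hb] at hw
      have ha : ¬ ((a : ℕ) + 1 = i) := by omega
      obtain ⟨u, hu, hadj⟩ :=
        hdom ⟨(a : ℕ), lt_of_lt_of_le a.isLt hik⟩ ⟨(b : ℕ), lt_of_lt_of_le b.isLt hik⟩
          (by simp only [Fin.le_def, Fin.val_mk]; omega) w hw
      refine ⟨u, ?_, hadj⟩
      rw [if_neg ha]
      exact hu
  · simp only [hQ]
    rw [if_pos (by omega)]
    exact ⟨j, by omega, hv⟩
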